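/- If the ringing path on a bosonic multiline queue D triggered at site i is (𝔞_1,...,𝔞_{L+1}) and the reverse ringing path on F̃_i(D) triggered at site 𝔞_{L+1} − 1 is (𝔟_L,...,𝔟_0), then 𝔞_j = 𝔟_{j-1} + 1 for all 1 ≤ j ≤ L+1. -/
import Mathlib


/-- Forward ringing path on a bosonic multiline queue (rows indexed from `0`):
`bfPath D i j = 𝔞_{j+1}`, with `𝔞_1 = i` and `𝔞_{j+1} = 𝔞_j` if `𝔞_j ∉ D_j`,
otherwise `𝔞_j + 1` (mod `n`). -/
def bfPath {n : ℕ} (D : ℕ → Multiset (ZMod n)) (i : ZMod n) : ℕ → ZMod n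
  | 0 => i
  | j + 1 => if bfPath D i j ∈ D j then bfPath D i j + 1 else bfPath D i j

/-- Forward ringing transition `F̃(D, i) = (D', 𝔞_{L+1} − 1)`: in each row `j` with
`𝔞_j ∈ D_j`, one particle hops from site `𝔞_j` to site `𝔞_j + 1`. -/
def bF {n : ℕ} (L : ℕ) (D : ℕ → Multiset (ZMod n)) (i : ZMod n) :
    (ℕ → Multiset (ZMod n)) × ZMod n :=
  (fun j =>
    if j < L then
      (if bfPath D i j ∈ D j then (bfPath D i j + 1) ::ₘ (D j).erase (bfPath D i j) else D j)
    else D j,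
   bfPath D i L - 1)

/-- Reverse ringing path: `brPath L D i t = 𝔟_{L−t}`, with `𝔟_L = i` and
`𝔟_j = 𝔟_{j+1}` if `𝔟_{j+1} + 1 ∉ D_{j+1}`, else `𝔟_{j+1} − 1`
(rows `1, …, L` of the paper are indexed `0, …, L-1` here). -/
def brPath {n : ℕ} (L : ℕ) (D : ℕ → Multiset (ZMod n)) (i : ZMod n) : ℕ → ZMod n
  | 0 => i
  | t + 1 =>
    if brPath L D i t + 1 ∈ D (L - 1 - t) then brPath L D i t - 1 else brPath L D i t

/-- Reverse ringing transition `R̃(D, i) = (D'', 𝔟_0 + 1)`: in each row `j` with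
`𝔟_j + 1 ∈ D_j`, one particle hops from site `𝔟_j + 1` to site `𝔟_j`. -/
def bR {n : ℕ} (L : ℕ) (D : ℕ → Multiset (ZMod n)) (i : ZMod n) :
    (ℕ → Multiset (ZMod n)) × ZMod n :=
  (fun j =>
    if j < L then
      (let b := brPath L D i (L - 1 - j);
       if b + 1 ∈ D j then b ::ₘ (D j).erase (b + 1) else D j)
    else D j,
   brPath L D i L + 1)

/-- Total number of particles at site `s` (summed over all `L` rows). -/
def colCount {n : ℕ} (L : ℕ) (D : ℕ → Multiset (ZMod n)) (s : ZMod n) : ℕ :=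
  ∑ t ∈ Finset.range L, (D t).count s

/-- Column `s` of `D` is empty: no row contains site `s`. -/
def colEmpty {n : ℕ} (L : ℕ) (D : ℕ → Multiset (ZMod n)) (s : ZMod n) : Prop :=
  ∀ t, t < L → s ∉ D t


lemma bosonic_aux (n L : ℕ) (D : ℕ → Multiset (ZMod n)) (i : ZMod n) :
    ∀ d, d ≤ L →
      bfPath D i (L - d) = brPath L (bF L D i).1 (bF L D i).2 d + 1 := by
  intro d
  induction d with
  | zero =>
    intro _
    simp [brPath, bF]
  | succ d ih =>
    intro hd
    have hdL : d ≤ L := Nat.le_of_succ_le hd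
    have hj : L - d = (L - (d + 1)) + 1 := by omega
    set j := L - (d + 1) with hjdef
    have hjL : j < L := by omega
    have IH := ih hdL
    rw [hj] at IH
    have hb : brPath L (bF L D i).1 (bF L D i).2 d = bfPath D i (j + 1) - 1 := by
      rw [IH]; ring
    have hrow : L - 1 - d = j := by omega
    show bfPath D i j = brPath L (bF L D i).1 (bF L D i).2 (d + 1) + 1
    rw [brPath, hrow, hb]
    by_cases h : bfPath D i j ∈ D j
    · have ha : bfPath D i (j + 1) = bfPath D i j + 1 := by rw [bfPath, if_pos h]
      have hmem : bfPath D i (j + 1) - 1 + 1 ∈ (bF L D i).1 j := by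
        simp only [bF, if_pos hjL, if_pos h, sub_add_cancel, ha]
        exact Multiset.mem_cons_self _ _
      rw [if_pos hmem, ha]; ring
    · have ha : bfPath D i (j + 1) = bfPath D i j := by rw [bfPath, if_neg h]
      have hmem : bfPath D i (j + 1) - 1 + 1 ∉ (bF L D i).1 j := by
        simp only [bF, if_pos hjL, if_neg h, sub_add_cancel, ha]
        exact h
      rw [if_neg hmem, ha]; ring

/-- if the forward ringing path on `D` triggered at site `i` is
`(𝔞_1, …, 𝔞_{L+1})` and the reverse ringing path on `F̃_i(D)` triggered at site
`𝔞_{L+1} − 1` is `(𝔟_L, …, 𝔟_0)`, then `𝔞_j = 𝔟_{j-1} + 1` for all `1 ≤ j ≤ L+1`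
(here `𝔞_{j+1} = bfPath D i j` and `𝔟_t = brPath L (F̃_i D) (𝔞_{L+1}−1) (L−t)`). -/
theorem bosonic_ringing_path_shift (n L : ℕ) (D : ℕ → Multiset (ZMod n)) (i : ZMod n) :
    ∀ j, j ≤ L →
      bfPath D i j = brPath L (bF L D i).1 (bF L D i).2 (L - j) + 1 := by
  intro j hj
  have := bosonic_aux n L D i (L - j) (Nat.sub_le _ _)
  rwa [Nat.sub_sub_self hj] at this
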